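/- For every k ≥ 2 and every finite set V with |V| ≥ k, there exists a natural number r with r ≤ C_k · log|V| (for a constant C_k depending only on k, one may take r = ⌈(k^{k+1}/k!)·ln|V|⌉) and functions f₁, ..., f_r : V → {1,...,k} such that for every subset E ⊆ V with |E| = k there exists an index i ∈ {1,...,r} with |f_i(E)| = k, i.e., f_i is injective on E. -/

import Mathlib

lemma aux_factorial_lt_pow {k : ℕ} (hk : 2 ≤ k) : k.factorial < k ^ k := by
  obtain ⟨m, rfl⟩ : ∃ m, k = m + 1 := ⟨k - 1, by omega⟩
  have h2 : m.factorial ≤ m ^ m := Nat.factorial_le_pow m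
  have h3 : m ^ m < (m + 1) ^ m := Nat.pow_lt_pow_left (by omega) (by omega)
  calc (m + 1).factorial = (m + 1) * m.factorial := Nat.factorial_succ m
    _ ≤ (m + 1) * (m ^ m) := Nat.mul_le_mul_left _ h2
    _ < (m + 1) * (m + 1) ^ m := mul_lt_mul_of_pos_left h3 (by omega)
    _ = (m + 1) ^ (m + 1) := by ring

instance auxInjDec {β : Type} [Fintype β] [DecidableEq β] (k : ℕ) (p : β → Prop)
    [DecidablePred p] :
    DecidablePred (fun g : β → Fin k =>
      Function.Injective (fun x : {x // p x} => g x.1)) :=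
  fun _ => Fintype.decidableInjectiveFintype _

lemma aux_count_inj {β : Type} [Fintype β] [DecidableEq β] (k : ℕ) (p : β → Prop)
    [DecidablePred p] (hcard : Fintype.card {x // p x} = k) :
    Fintype.card {g : β → Fin k // Function.Injective (fun x : {x // p x} => g x.1)}
      = k.factorial * k ^ (Fintype.card β - k) := by
  let e := Equiv.piEquivPiSubtypeProd p (fun _ => Fin k)
  have e1 : {g : β → Fin k // Function.Injective (fun x : {x // p x} => g x.1)}
      ≃ {q : ({x // p x} → Fin k) × ({x // ¬ p x} → Fin k) // Function.Injective q.1} :=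
    e.subtypeEquiv (by intro g; rfl)
  have e2 : {q : ({x // p x} → Fin k) × ({x // ¬ p x} → Fin k) // Function.Injective q.1}
      ≃ {h : {x // p x} → Fin k // Function.Injective h} × ({x // ¬ p x} → Fin k) :=
    Equiv.prodSubtypeFstEquivSubtypeProd
  rw [Fintype.card_congr (e1.trans e2), Fintype.card_prod,
    Fintype.card_congr (Equiv.subtypeInjectiveEquivEmbedding _ _),
    Fintype.card_embedding_eq, Fintype.card_fun, hcard, Fintype.card_fin,
    Nat.descFactorial_self, Fintype.card_subtype_compl, hcard]

/-- For every `k ≥ 2` there is a constant `C = C k` (one may take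
`r = ⌈(k^{k+1}/k!)·ln |V|⌉`) such that for every finite set `V` with `|V| ≥ k`
there are `r ≤ C · log |V|` functions `f₁, …, f_r : V → {1,…,k}` such that every
`k`-element subset `E ⊆ V` is mapped injectively by some `f_i`. -/
theorem exists_separating_functions (k : ℕ) (hk : 2 ≤ k) :
    ∃ C : ℝ, 0 < C ∧
      ∀ (α : Type) (V : Finset α), k ≤ V.card →
        ∃ (r : ℕ) (f : Fin r → α → Fin k),
          (r : ℝ) ≤ C * Real.log V.card ∧
          ∀ E : Finset α, E ⊆ V → E.card = k →
            ∃ i : Fin r, Set.InjOn (f i) E := by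
  classical
  have hkR : (0:ℝ) < (k:ℝ) := by exact_mod_cast (by omega : 0 < k)
  have hkk : (0:ℝ) < (k:ℝ) ^ k := by positivity
  have hfac_lt : (k.factorial : ℝ) < (k:ℝ) ^ k := by
    exact_mod_cast aux_factorial_lt_pow hk
  have hfac_pos : (0:ℝ) < (k.factorial : ℝ) := by
    exact_mod_cast k.factorial_pos
  set q : ℝ := 1 - (k.factorial : ℝ) / (k:ℝ) ^ k with hqdef
  have hq0 : 0 < q := by
    have : (k.factorial : ℝ) / (k:ℝ) ^ k < 1 := (div_lt_one hkk).mpr hfac_lt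
    simp only [hqdef]; linarith
  have hq1 : q < 1 := by
    have : 0 < (k.factorial : ℝ) / (k:ℝ) ^ k := div_pos hfac_pos hkk
    simp only [hqdef]; linarith
  set L : ℝ := -Real.log q with hLdef
  have hL : 0 < L := by
    have := Real.log_neg hq0 hq1
    simp only [hLdef]; linarith
  have hlog2 : 0 < Real.log 2 := Real.log_pos (by norm_num)
  refine ⟨(k:ℝ) / L + 2 / Real.log 2, by positivity, ?_⟩
  intro α V hV
  set n := V.card with hndef
  have hn2 : 2 ≤ n := le_trans hk hV
  have hn1 : (1:ℝ) < (n:ℝ) := by exact_mod_cast (by omega : 1 < n)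
  have hnpos : (0:ℝ) < (n:ℝ) := by linarith
  have hlogn : 0 < Real.log n := Real.log_pos hn1
  set x : ℝ := (k * Real.log n) / L with hxdef
  have hx0 : 0 ≤ x := by positivity
  set r : ℕ := ⌈x⌉₊ + 1 with hrdef
  have hrge : x + 1 ≤ (r:ℝ) := by
    have := Nat.le_ceil x
    push_cast [hrdef]; linarith
  have hrle : (r:ℝ) ≤ ((k:ℝ) / L + 2 / Real.log 2) * Real.log n := by
    have h1 : (⌈x⌉₊ : ℝ) < x + 1 := Nat.ceil_lt_add_one hx0
    have h2 : Real.log 2 ≤ Real.log n := by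
      apply Real.log_le_log (by norm_num)
      exact_mod_cast hn2
    have h3 : (2:ℝ) ≤ 2 / Real.log 2 * Real.log n := by
      rw [div_mul_eq_mul_div, le_div_iff₀ hlog2]; nlinarith
    have h4 : x = (k:ℝ) / L * Real.log n := by rw [hxdef]; ring
    push_cast [hrdef]
    nlinarith
  -- the key probabilistic / counting step
  -- work with functions on the subtype ↥V
  have hcard_coe : Fintype.card ↥V = n := Fintype.card_coe V
  -- badness predicate
  set Good : (↥V → Fin k) → Finset α → Prop :=
    fun g E => Function.Injective (fun x : {x : ↥V // (x:α) ∈ E} => g x.1) with hGood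
  set Bad : Finset (Fin r → (↥V → Fin k)) :=
    Finset.univ.filter
      (fun F => ∃ E ∈ V.powersetCard k, ∀ i, ¬ Good (F i) E) with hBad
  set bc : ℕ := k ^ n - k.factorial * k ^ (n - k) with hbc
  have hfkle : k.factorial * k ^ (n - k) ≤ k ^ n := by
    calc k.factorial * k ^ (n - k) ≤ k ^ k * k ^ (n - k) :=
          Nat.mul_le_mul_right _ (aux_factorial_lt_pow hk).le
      _ = k ^ n := by rw [← pow_add]; congr 1; omega
  -- per-E count
  have hperE : ∀ E ∈ V.powersetCard k,
      (Finset.univ.filter (fun F : Fin r → (↥V → Fin k) => ∀ i, ¬ Good (F i) E)).card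
        = bc ^ r := by
    intro E hE
    rw [Finset.mem_powersetCard] at hE
    have hcardE : Fintype.card {x : ↥V // (x:α) ∈ E} = k := by
      have e : {x : ↥V // (x:α) ∈ E} ≃ {a // a ∈ E} :=
        { toFun := fun x => ⟨x.1.1, x.2⟩
          invFun := fun a => ⟨⟨a.1, hE.1 a.2⟩, a.2⟩
          left_inv := by rintro ⟨⟨a, hV⟩, hEa⟩; rfl
          right_inv := by rintro ⟨a, hEa⟩; rfl }
      rw [Fintype.card_congr e, Fintype.card_coe, hE.2]
    set S : Finset (↥V → Fin k) := Finset.univ.filter (fun g => ¬ Good g E) with hS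
    have hSeq : (Finset.univ.filter (fun F : Fin r → (↥V → Fin k) => ∀ i, ¬ Good (F i) E))
        = Fintype.piFinset (fun _ : Fin r => S) := by
      ext F
      simp [hS, Fintype.mem_piFinset]
    have hScard : S.card = bc := by
      have h1 : S.card = Fintype.card {g : ↥V → Fin k // ¬ Good g E} :=
        (Fintype.card_subtype _).symm
      have h2 : Fintype.card {g : ↥V → Fin k // Good g E}
          = k.factorial * k ^ (n - k) := by
        have h := aux_count_inj (β := ↥V) k (fun x : ↥V => (x:α) ∈ E)
          (by convert hcardE using 2)
        rw [hcard_coe] at h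
        convert h using 2
      have h3 : Fintype.card {g : ↥V → Fin k // ¬ Good g E}
          = Fintype.card (↥V → Fin k) - Fintype.card {g : ↥V → Fin k // Good g E} :=
        Fintype.card_subtype_compl _
      rw [h1, h3, h2, hbc, Fintype.card_fun, Fintype.card_fin, hcard_coe]
    rw [hSeq, Fintype.card_piFinset]
    simp [hScard]
  have hBadcard : Bad.card ≤ n.choose k * bc ^ r := by
    have hsub : Bad ⊆ (V.powersetCard k).biUnion
        (fun E => Finset.univ.filter (fun F : Fin r → (↥V → Fin k) => ∀ i, ¬ Good (F i) E)) := by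
      intro F hF
      rw [hBad, Finset.mem_filter] at hF
      obtain ⟨-, E, hE, hFE⟩ := hF
      exact Finset.mem_biUnion.mpr ⟨E, hE, by simp [hFE]⟩
    calc Bad.card ≤ _ := Finset.card_le_card hsub
      _ ≤ ∑ E ∈ V.powersetCard k,
            (Finset.univ.filter (fun F : Fin r → (↥V → Fin k) => ∀ i, ¬ Good (F i) E)).card :=
        Finset.card_biUnion_le
      _ = ∑ E ∈ V.powersetCard k, bc ^ r := Finset.sum_congr rfl hperE
      _ = (V.powersetCard k).card * bc ^ r := by rw [Finset.sum_const, smul_eq_mul]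
      _ = n.choose k * bc ^ r := by rw [Finset.card_powersetCard]
  -- the numeric strict inequality
  have hbcR : ((bc : ℕ) : ℝ) = (k:ℝ) ^ n * q := by
    rw [hbc, Nat.cast_sub hfkle]
    push_cast
    have hsplit : (k:ℝ) ^ n = (k:ℝ) ^ k * (k:ℝ) ^ (n - k) := by
      rw [← pow_add]; congr 1; omega
    rw [hqdef, hsplit]
    field_simp
  have hmain : (n:ℝ) ^ k * q ^ r < 1 := by
    have hlogq : Real.log q = -L := by rw [hLdef]; ring
    have hexp1 : (n:ℝ) ^ k = Real.exp ((k:ℝ) * Real.log n) := by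
      rw [Real.exp_nat_mul, Real.exp_log hnpos]
    have hexp2 : q ^ r = Real.exp ((r:ℝ) * Real.log q) := by
      rw [Real.exp_nat_mul, Real.exp_log hq0]
    rw [hexp1, hexp2, ← Real.exp_add]
    have hxL : x * L = (k:ℝ) * Real.log n := by
      rw [hxdef, div_mul_cancel₀]
      exact ne_of_gt hL
    have hneg : (k:ℝ) * Real.log n + (r:ℝ) * Real.log q < 0 := by
      rw [hlogq]
      nlinarith
    calc Real.exp _ < Real.exp 0 := Real.exp_lt_exp.mpr hneg
      _ = 1 := Real.exp_zero
  have hcount : n.choose k * bc ^ r < (k ^ n) ^ r := by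
    have hR : ((n.choose k : ℕ) : ℝ) * ((bc:ℕ):ℝ) ^ r < (((k:ℝ) ^ n)) ^ r := by
      have hch : ((n.choose k : ℕ) : ℝ) ≤ (n:ℝ) ^ k := by
        exact_mod_cast Nat.choose_le_pow n k
      have hknr : (0:ℝ) < ((k:ℝ) ^ n) ^ r := by positivity
      have hqr : (0:ℝ) ≤ q ^ r := by positivity
      calc ((n.choose k : ℕ) : ℝ) * ((bc:ℕ):ℝ) ^ r
          = (((n.choose k : ℕ) : ℝ) * q ^ r) * ((k:ℝ) ^ n) ^ r := by
            rw [hbcR, mul_pow]; ring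
        _ ≤ ((n:ℝ) ^ k * q ^ r) * ((k:ℝ) ^ n) ^ r := by
            apply mul_le_mul_of_nonneg_right _ hknr.le
            exact mul_le_mul_of_nonneg_right hch hqr
        _ < 1 * ((k:ℝ) ^ n) ^ r := by
            exact mul_lt_mul_of_pos_right hmain hknr
        _ = ((k:ℝ) ^ n) ^ r := one_mul _
    exact_mod_cast hR
  have hcardΩ : Fintype.card (Fin r → (↥V → Fin k)) = (k ^ n) ^ r := by
    rw [Fintype.card_fun, Fintype.card_fun, Fintype.card_fin, Fintype.card_fin, hcard_coe]
  have hlt : Bad.card < Fintype.card (Fin r → (↥V → Fin k)) := by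
    rw [hcardΩ]; exact lt_of_le_of_lt hBadcard hcount
  obtain ⟨F, hF⟩ : ∃ F : Fin r → (↥V → Fin k), F ∉ Bad := by
    by_contra h
    push_neg at h
    have : Bad = Finset.univ := Finset.eq_univ_iff_forall.mpr h
    rw [this, Finset.card_univ] at hlt
    exact lt_irrefl _ hlt
  rw [hBad, Finset.mem_filter] at hF
  push_neg at hF
  have hFgood : ∀ E ∈ V.powersetCard k, ∃ i, Good (F i) E :=
    hF (Finset.mem_univ F)
  refine ⟨r, fun i a => if h : a ∈ V then F i ⟨a, h⟩ else ⟨0, by omega⟩, hrle, ?_⟩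
  intro E hEV hEk
  obtain ⟨i, hi⟩ := hFgood E (Finset.mem_powersetCard.mpr ⟨hEV, hEk⟩)
  refine ⟨i, ?_⟩
  intro a ha b hb heq
  have haE : a ∈ E := ha
  have hbE : b ∈ E := hb
  have haV : a ∈ V := hEV haE
  have hbV : b ∈ V := hEV hbE
  simp only [dif_pos haV, dif_pos hbV] at heq
  have := hi (a₁ := ⟨⟨a, haV⟩, haE⟩) (a₂ := ⟨⟨b, hbV⟩, hbE⟩) heq
  exact congrArg (fun z => (z : {x : ↥V // (x:α) ∈ E}).1.1) this
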